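/- For every natural number n and every real number c > 0, the integral from 0 to ∞ of (ln x)/(c^2 + x^2)^{n+1} dx equals (π/(2c)^{2n+1})·C(2n, n)·(ln c - ∑_{k=1}^{n} 1/(2k-1)), where C(2n, n) is the central binomial coefficient. -/

import Mathlib

open Real Finset MeasureTheory Set Filter Topology

namespace GR4231

variable {c : ℝ}

lemma Ppos (hc : 0 < c) (x : ℝ) : 0 < c ^ 2 + x ^ 2 := by positivity

lemma Pne (hc : 0 < c) (n : ℕ) (x : ℝ) : (c ^ 2 + x ^ 2) ^ n ≠ 0 :=
  (pow_pos (Ppos hc x) n).ne'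

/-- antiderivative of `(c²+x²)⁻¹`. -/
lemma hasDerivAt_arctan_div (hc : 0 < c) (x : ℝ) :
    HasDerivAt (fun x : ℝ => c⁻¹ * arctan (x / c)) ((c ^ 2 + x ^ 2)⁻¹) x := by
  have h1 : HasDerivAt (fun y : ℝ => arctan (y / c)) ((1 + (x / c) ^ 2)⁻¹ * (1 / c)) x :=
    ((Real.hasDerivAt_arctan' (x / c)).comp x ((hasDerivAt_id' x).div_const c) :)
  have := h1.const_mul c⁻¹
  refine this.congr_deriv ?_
  have hc' : c ≠ 0 := hc.ne'
  field_simp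

lemma tendsto_arctan_div (hc : 0 < c) :
    Tendsto (fun x : ℝ => c⁻¹ * arctan (x / c)) atTop (𝓝 (c⁻¹ * (π / 2))) := by
  apply Tendsto.const_mul
  exact (Real.tendsto_arctan_atTop.mono_right nhdsWithin_le_nhds).comp
    (tendsto_id.atTop_div_const hc)

lemma intA0 (hc : 0 < c) : IntegrableOn (fun x => (c ^ 2 + x ^ 2)⁻¹) (Ioi (0:ℝ)) := by
  refine integrableOn_Ioi_deriv_of_nonneg ?_ (fun x _ => hasDerivAt_arctan_div hc x)
    (fun x _ => by positivity) (tendsto_arctan_div hc)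
  exact ((hasDerivAt_arctan_div hc 0).continuousAt).continuousWithinAt

lemma valA0 (hc : 0 < c) : ∫ x in Ioi (0:ℝ), (c ^ 2 + x ^ 2)⁻¹ = π / (2 * c) := by
  rw [integral_Ioi_of_hasDerivAt_of_tendsto
    ((hasDerivAt_arctan_div hc 0).continuousAt).continuousWithinAt
    (fun x _ => hasDerivAt_arctan_div hc x) (intA0 hc) (tendsto_arctan_div hc)]
  simp [arctan_zero]
  ring

lemma contInv (hc : 0 < c) (n : ℕ) :
    Continuous (fun x : ℝ => ((c ^ 2 + x ^ 2) ^ (n + 1))⁻¹) := by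
  refine Continuous.inv₀ (by continuity) (fun x => Pne hc (n+1) x)

lemma intA (hc : 0 < c) (n : ℕ) :
    IntegrableOn (fun x => ((c ^ 2 + x ^ 2) ^ (n + 1))⁻¹) (Ioi (0:ℝ)) := by
  refine Integrable.mono' ((intA0 hc).const_mul ((c ^ 2) ^ n)⁻¹)
    ((contInv hc n).aestronglyMeasurable) ?_
  filter_upwards with x
  rw [Real.norm_eq_abs, abs_of_nonneg (by positivity), pow_succ, mul_inv]
  refine mul_le_mul ?_ le_rfl (by positivity) (by positivity)
  refine inv_anti₀ (by positivity) (pow_le_pow_left₀ (by positivity) (by nlinarith [sq_nonneg x]) n)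
-- bounds on log
lemma log_le_two_sqrt {x : ℝ} (hx : 0 ≤ x) : log x ≤ 2 * x ^ (2⁻¹ : ℝ) := by
  have := Real.log_le_rpow_div hx (by norm_num : (0:ℝ) < 2⁻¹)
  calc log x ≤ x ^ (2⁻¹:ℝ) / 2⁻¹ := this
    _ = 2 * x ^ (2⁻¹:ℝ) := by ring

lemma neg_log_le {x : ℝ} (hx : 0 < x) : -log x ≤ 2 * x ^ (-2⁻¹ : ℝ) := by
  have h := log_le_two_sqrt (x := x⁻¹) (by positivity)
  rw [Real.log_inv] at h
  rwa [Real.inv_rpow hx.le, ← Real.rpow_neg hx.le] at h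

lemma measB (hc : 0 < c) (n : ℕ) :
    AEStronglyMeasurable (fun x : ℝ => log x / (c ^ 2 + x ^ 2) ^ (n + 1))
      (volume.restrict (Ioi (0:ℝ))) := by
  exact ((Real.measurable_log.mul ((contInv hc n).measurable)).aestronglyMeasurable).restrict.congr
    (by filter_upwards with x using (div_eq_mul_inv _ _).symm)

lemma intB_zero_one (hc : 0 < c) (n : ℕ) :
    IntegrableOn (fun x => log x / (c ^ 2 + x ^ 2) ^ (n + 1)) (Ioo (0:ℝ) 1) := by
  refine Integrable.mono'
    (g := fun x => ((c ^ 2) ^ (n+1))⁻¹ * (2 * x ^ (-2⁻¹ : ℝ)))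
    ((((intervalIntegral.integrableOn_Ioo_rpow_iff one_pos).2 (by norm_num)).const_mul 2).const_mul _)
    ((measB hc n).mono_set Ioo_subset_Ioi_self) ?_
  filter_upwards [ae_restrict_mem measurableSet_Ioo] with x hx
  obtain ⟨hx0, hx1⟩ := hx
  have hlog : log x ≤ 0 := Real.log_nonpos hx0.le hx1.le
  rw [Real.norm_eq_abs, abs_div, abs_of_nonpos hlog, abs_of_nonneg (by positivity),
    div_eq_mul_inv]
  have h2 : ((c ^ 2 + x ^ 2) ^ (n+1))⁻¹ ≤ ((c ^ 2) ^ (n+1))⁻¹ :=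
    inv_anti₀ (by positivity) (pow_le_pow_left₀ (by positivity)
      (by nlinarith [sq_nonneg x]) (n+1))
  calc (-log x) * ((c ^ 2 + x ^ 2) ^ (n+1))⁻¹
      ≤ (2 * x ^ (-2⁻¹ : ℝ)) * ((c ^ 2) ^ (n+1))⁻¹ :=
        mul_le_mul (neg_log_le hx0) h2 (by positivity) (by positivity)
    _ = ((c ^ 2) ^ (n+1))⁻¹ * (2 * x ^ (-2⁻¹ : ℝ)) := mul_comm _ _

lemma pow_ge_sq {x : ℝ} (hc : 0 < c) (hx : 1 ≤ x) (n : ℕ) :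
    x ^ 2 ≤ (c ^ 2 + x ^ 2) ^ (n + 1) := by
  have h1 : (1:ℝ) ≤ c ^ 2 + x ^ 2 := by nlinarith
  calc x ^ 2 ≤ c ^ 2 + x ^ 2 := by nlinarith
    _ ≤ (c ^ 2 + x ^ 2) ^ (n + 1) := le_self_pow₀ h1 (Nat.succ_ne_zero n)

lemma intB_one_top (hc : 0 < c) (n : ℕ) :
    IntegrableOn (fun x => log x / (c ^ 2 + x ^ 2) ^ (n + 1)) (Ioi (1:ℝ)) := by
  refine Integrable.mono'
    (g := fun x => 2 * x ^ (-(3/2) : ℝ))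
    ((integrableOn_Ioi_rpow_of_lt (by norm_num) one_pos).const_mul 2)
    ((measB hc n).mono_set (Ioi_subset_Ioi one_pos.le)) ?_
  filter_upwards [ae_restrict_mem measurableSet_Ioi] with x hx
  have hx1 : (1:ℝ) < x := hx
  have hx0 : (0:ℝ) < x := one_pos.trans hx1
  have hlog : 0 ≤ log x := Real.log_nonneg hx1.le
  rw [Real.norm_eq_abs, abs_div, abs_of_nonneg hlog, abs_of_nonneg (by positivity)]
  have key : log x / (c ^ 2 + x ^ 2) ^ (n + 1) ≤ (2 * x ^ (2⁻¹:ℝ)) / x ^ 2 := by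
    exact div_le_div₀ (by positivity) (log_le_two_sqrt hx0.le) (by positivity) (pow_ge_sq hc hx1.le n)
  refine key.trans (le_of_eq ?_)
  rw [mul_div_assoc]
  congr 1
  rw [← Real.rpow_natCast x 2, ← Real.rpow_sub hx0]
  norm_num

lemma intB (hc : 0 < c) (n : ℕ) :
    IntegrableOn (fun x => log x / (c ^ 2 + x ^ 2) ^ (n + 1)) (Ioi (0:ℝ)) := by
  have : Set.Ioo (0:ℝ) 1 ∪ Set.Ici 1 = Set.Ioi 0 := Set.Ioo_union_Ici_eq_Ioi one_pos
  rw [← this]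
  refine (intB_zero_one hc n).union ?_
  rw [integrableOn_Ici_iff_integrableOn_Ioi]
  exact intB_one_top hc n
lemma hasDerivAt_invpow (hc : 0 < c) (n : ℕ) (x : ℝ) :
    HasDerivAt (fun x : ℝ => ((c ^ 2 + x ^ 2) ^ (n + 1))⁻¹)
      (-(2 * (n + 1) * x) * ((c ^ 2 + x ^ 2) ^ (n + 2))⁻¹) x := by
  have hb : HasDerivAt (fun x : ℝ => c ^ 2 + x ^ 2) (2 * x) x := by
    simpa using ((hasDerivAt_pow 2 x).const_add (c ^ 2))
  have h := (hb.pow (n + 1)).inv (Pne hc (n + 1) x)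
  simp only [Nat.add_sub_cancel] at h
  refine h.congr_deriv ?_
  simp only [Pi.pow_apply]
  have h0 := (Ppos hc x).ne'
  field_simp
  push_cast
  ring

lemma tendsto_xdiv_atTop (hc : 0 < c) (n : ℕ) :
    Tendsto (fun x : ℝ => x * ((c ^ 2 + x ^ 2) ^ (n + 1))⁻¹) atTop (𝓝 0) := by
  refine tendsto_of_tendsto_of_tendsto_of_le_of_le' tendsto_const_nhds
    tendsto_inv_atTop_zero ?_ ?_
  · filter_upwards [eventually_ge_atTop (1:ℝ)] with x hx
    have hx0 : (0:ℝ) < x := lt_of_lt_of_le one_pos hx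
    positivity
  · filter_upwards [eventually_ge_atTop (1:ℝ)] with x hx
    have hx0 : (0:ℝ) < x := lt_of_lt_of_le one_pos hx
    calc x * ((c ^ 2 + x ^ 2) ^ (n + 1))⁻¹
        ≤ x * (x ^ 2)⁻¹ := by
          refine mul_le_mul le_rfl (inv_anti₀ (by positivity) (pow_ge_sq hc hx n))
            (by positivity) hx0.le
      _ = x⁻¹ := by
          rw [pow_two, mul_inv, ← mul_assoc, mul_inv_cancel₀ hx0.ne', one_mul]

lemma keyA (hc : 0 < c) (n : ℕ) :
    (2 * (n:ℝ) + 2) * c ^ 2 * (∫ x in Ioi (0:ℝ), ((c ^ 2 + x ^ 2) ^ (n + 2))⁻¹) =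
      (2 * (n:ℝ) + 1) * ∫ x in Ioi (0:ℝ), ((c ^ 2 + x ^ 2) ^ (n + 1))⁻¹ := by
  set f : ℝ → ℝ := fun x => x * ((c ^ 2 + x ^ 2) ^ (n + 1))⁻¹ with hf
  have hderiv : ∀ x : ℝ, HasDerivAt f
      ((2 * (n:ℝ) + 2) * c ^ 2 * ((c ^ 2 + x ^ 2) ^ (n + 2))⁻¹
        - (2 * (n:ℝ) + 1) * ((c ^ 2 + x ^ 2) ^ (n + 1))⁻¹) x := by
    intro x
    have h := (hasDerivAt_id x).mul (hasDerivAt_invpow hc n x)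
    refine h.congr_deriv ?_
    simp only [Pi.mul_apply, id_eq]
    have h0 := (Ppos hc x).ne'
    field_simp
    ring
  have hint1 : IntegrableOn (fun x : ℝ => (2 * (n:ℝ) + 2) * c ^ 2 * ((c ^ 2 + x ^ 2) ^ (n + 2))⁻¹)
      (Ioi (0:ℝ)) := (intA hc (n + 1)).const_mul _
  have hint2 : IntegrableOn (fun x : ℝ => (2 * (n:ℝ) + 1) * ((c ^ 2 + x ^ 2) ^ (n + 1))⁻¹)
      (Ioi (0:ℝ)) := (intA hc n).const_mul _
  have key := integral_Ioi_of_hasDerivAt_of_tendsto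
    (f := f) ((continuous_id.mul (contInv hc n)).continuousWithinAt)
    (fun x _ => hderiv x) (hint1.sub hint2) (tendsto_xdiv_atTop hc n)
  rw [integral_sub hint1 hint2, MeasureTheory.integral_const_mul, MeasureTheory.integral_const_mul] at key
  have hf0 : f 0 = 0 := by simp [hf]
  rw [hf0, sub_zero] at key
  linarith [key]
lemma keyB (hc : 0 < c) (n : ℕ) :
    (2 * (n:ℝ) + 2) * c ^ 2 * (∫ x in Ioi (0:ℝ), log x / (c ^ 2 + x ^ 2) ^ (n + 2))
      - (2 * (n:ℝ) + 1) * (∫ x in Ioi (0:ℝ), log x / (c ^ 2 + x ^ 2) ^ (n + 1))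
      + (∫ x in Ioi (0:ℝ), ((c ^ 2 + x ^ 2) ^ (n + 1))⁻¹) = 0 := by
  set v : ℝ → ℝ := fun x => x * log x * ((c ^ 2 + x ^ 2) ^ (n + 1))⁻¹ with hv
  have hderiv : ∀ x ∈ Ioi (0:ℝ), HasDerivAt v
      ((2 * (n:ℝ) + 2) * c ^ 2 * (log x / (c ^ 2 + x ^ 2) ^ (n + 2))
        - (2 * (n:ℝ) + 1) * (log x / (c ^ 2 + x ^ 2) ^ (n + 1))
        + ((c ^ 2 + x ^ 2) ^ (n + 1))⁻¹) x := by
    intro x hx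
    have hx0 : (0:ℝ) < x := hx
    have h := ((hasDerivAt_id x).mul (Real.hasDerivAt_log hx0.ne')).mul
      (hasDerivAt_invpow hc n x)
    refine h.congr_deriv ?_
    simp only [Pi.mul_apply, id_eq]
    have h0 := (Ppos hc x).ne'
    field_simp
    ring
  have hcont : ContinuousWithinAt v (Ici 0) 0 := by
    have h1 : Tendsto (fun x : ℝ => x * log x) (𝓝[>] 0) (𝓝 0) := by
      have := tendsto_log_mul_rpow_nhdsGT_zero one_pos
      refine (this.congr' ?_).congr (fun x => mul_comm _ _)
      filter_upwards with x using by rw [Real.rpow_one]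
    have h2 : Tendsto v (𝓝[>] 0) (𝓝 0) := by
      have h3 : Tendsto (fun x : ℝ => ((c ^ 2 + x ^ 2) ^ (n + 1))⁻¹) (𝓝[>] 0)
          (𝓝 (((c ^ 2 + (0:ℝ) ^ 2) ^ (n + 1))⁻¹)) :=
        ((contInv hc n).tendsto 0).mono_left nhdsWithin_le_nhds
      simpa using h1.mul h3
    have hv0 : v 0 = 0 := by simp [hv]
    rw [ContinuousWithinAt, hv0, ← Set.Ioi_insert, nhdsWithin_insert, Filter.tendsto_sup]
    exact ⟨by simpa [hv0] using tendsto_pure_nhds v 0, h2⟩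
  have htop : Tendsto v atTop (𝓝 0) := by
    have hlim : Tendsto (fun x : ℝ => 2 * x ^ (-2⁻¹ : ℝ)) atTop (𝓝 0) := by
      simpa using (tendsto_rpow_neg_atTop (by norm_num : (0:ℝ) < 2⁻¹)).const_mul 2
    refine tendsto_of_tendsto_of_tendsto_of_le_of_le' tendsto_const_nhds hlim ?_ ?_
    · filter_upwards [eventually_ge_atTop (1:ℝ)] with x hx
      have hx0 : (0:ℝ) < x := lt_of_lt_of_le one_pos hx
      have := Real.log_nonneg hx
      positivity
    · filter_upwards [eventually_ge_atTop (1:ℝ)] with x hx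
      have hx0 : (0:ℝ) < x := lt_of_lt_of_le one_pos hx
      have hlog : 0 ≤ log x := Real.log_nonneg hx
      calc x * log x * ((c ^ 2 + x ^ 2) ^ (n + 1))⁻¹
          ≤ x * (2 * x ^ (2⁻¹ : ℝ)) * (x ^ 2)⁻¹ := by
            refine mul_le_mul (mul_le_mul le_rfl (log_le_two_sqrt hx0.le) hlog hx0.le)
              (inv_anti₀ (by positivity) (pow_ge_sq hc hx n))
              (by positivity) (by positivity)
        _ = 2 * (x ^ (1:ℝ) * x ^ (2⁻¹:ℝ) * x ^ (-2:ℝ)) := by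
            rw [Real.rpow_one]
            rw [show x ^ (-2:ℝ) = (x ^ 2)⁻¹ by
              rw [← Real.rpow_natCast x 2, ← Real.rpow_neg hx0.le]; norm_num]
            ring
        _ = 2 * x ^ (-2⁻¹ : ℝ) := by
            rw [← Real.rpow_add hx0, ← Real.rpow_add hx0]; norm_num
  have hint1 : IntegrableOn
      (fun x : ℝ => (2 * (n:ℝ) + 2) * c ^ 2 * (log x / (c ^ 2 + x ^ 2) ^ (n + 2)))
      (Ioi (0:ℝ)) := (intB hc (n + 1)).const_mul _
  have hint2 : IntegrableOn
      (fun x : ℝ => (2 * (n:ℝ) + 1) * (log x / (c ^ 2 + x ^ 2) ^ (n + 1)))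
      (Ioi (0:ℝ)) := (intB hc n).const_mul _
  have hint12 : IntegrableOn
      (fun x : ℝ => (2 * (n:ℝ) + 2) * c ^ 2 * (log x / (c ^ 2 + x ^ 2) ^ (n + 2))
        - (2 * (n:ℝ) + 1) * (log x / (c ^ 2 + x ^ 2) ^ (n + 1))) (Ioi (0:ℝ)) :=
    hint1.sub hint2
  have key := integral_Ioi_of_hasDerivAt_of_tendsto (f := v) hcont hderiv
    (hint12.add (intA hc n)) htop
  rw [integral_add hint12 (intA hc n), integral_sub hint1 hint2,
    MeasureTheory.integral_const_mul, MeasureTheory.integral_const_mul] at key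
  have hv0 : v 0 = 0 := by simp [hv]
  rw [hv0, sub_zero] at key
  linarith [key]
lemma intB1 (hc : 0 < c) : IntegrableOn (fun x => log x / (c ^ 2 + x ^ 2)) (Ioi (0:ℝ)) := by
  simpa [pow_one] using intB hc 0

lemma valB0 (hc : 0 < c) :
    ∫ x in Ioi (0:ℝ), log x / (c ^ 2 + x ^ 2) = π / (2 * c) * log c := by
  have hc2 : (c:ℝ) ^ 2 ≠ 0 := by positivity
  set f : ℝ → ℝ := fun x => c ^ 2 / x with hf
  have hf' : ∀ x ∈ Ioi (0:ℝ), HasDerivWithinAt f (-(c ^ 2) / x ^ 2) (Ioi (0:ℝ)) x := by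
    intro x hx
    have hx0 : (0:ℝ) < x := hx
    have h := (hasDerivAt_const x (c ^ 2)).div (hasDerivAt_id x) hx0.ne'
    exact (by simpa using h.hasDerivWithinAt : HasDerivWithinAt _ (-(c ^ 2) / x ^ 2) (Ioi (0:ℝ)) x)
  have hinj : InjOn f (Ioi (0:ℝ)) := by
    intro x hx y hy h
    have hx0 : (0:ℝ) < x := hx
    have hy0 : (0:ℝ) < y := hy
    simp only [hf] at h
    field_simp at h
    exact h.symm
  have himg : f '' Ioi (0:ℝ) = Ioi (0:ℝ) := by
    ext y
    constructor
    · rintro ⟨x, hx, rfl⟩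
      have hx0 : (0:ℝ) < x := hx
      exact div_pos (by positivity) hx0
    · intro hy
      have hy0 : (0:ℝ) < y := hy
      refine ⟨c ^ 2 / y, div_pos (by positivity) hy0, ?_⟩
      simp only [hf]
      rw [div_div_cancel₀ hc2]
  have sub := integral_image_eq_integral_abs_deriv_smul measurableSet_Ioi hf' hinj
    (fun y => log y / (c ^ 2 + y ^ 2))
  rw [himg] at sub
  have congr2 : ∫ x in Ioi (0:ℝ), |(-(c ^ 2) / x ^ 2)| • (log (f x) / (c ^ 2 + (f x) ^ 2)) =
      ∫ x in Ioi (0:ℝ), (2 * log c * (c ^ 2 + x ^ 2)⁻¹ - log x / (c ^ 2 + x ^ 2)) := by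
    refine setIntegral_congr_fun measurableSet_Ioi (fun x hx => ?_)
    have hx0 : (0:ℝ) < x := hx
    have hP := (Ppos hc x).ne'
    rw [smul_eq_mul, abs_div, abs_neg, abs_of_nonneg (by positivity : (0:ℝ) ≤ c ^ 2),
      abs_of_nonneg (by positivity : (0:ℝ) ≤ x ^ 2)]
    simp only [hf]
    rw [Real.log_div (by positivity) hx0.ne', Real.log_pow]
    have hden : c ^ 2 + (c ^ 2 / x) ^ 2 ≠ 0 := by positivity
    field_simp
    ring
  rw [congr2] at sub
  rw [integral_sub ((intA0 hc).const_mul _) (intB1 hc), MeasureTheory.integral_const_mul,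
    valA0 hc] at sub
  have := valA0 hc
  linarith [sub]
lemma choose_id (n : ℕ) :
    ((n:ℝ) + 1) * (((2 * (n + 1)).choose (n + 1) : ℕ) : ℝ) =
      2 * (2 * (n:ℝ) + 1) * (((2 * n).choose n : ℕ) : ℝ) := by
  have h := Nat.succ_mul_centralBinom_succ n
  simp only [Nat.centralBinom] at h
  have h2 : ((n + 1) * ((2 * (n + 1)).choose (n + 1)) : ℕ) = ((2 * (2 * n + 1)) * ((2 * n).choose n) : ℕ) := by
    simpa [mul_assoc, mul_comm, mul_left_comm] using h
  exact_mod_cast congrArg (Nat.cast : ℕ → ℝ) h2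

lemma valA (hc : 0 < c) : ∀ n : ℕ,
    ∫ x in Ioi (0:ℝ), ((c ^ 2 + x ^ 2) ^ (n + 1))⁻¹ =
      π / (2 * c) ^ (2 * n + 1) * (((2 * n).choose n : ℕ) : ℝ) := by
  intro n
  induction n with
  | zero => simpa [pow_one] using valA0 hc
  | succ n ih =>
    have h := keyA hc n
    rw [ih] at h
    have hc2 : ((2:ℝ) * n + 2) * c ^ 2 ≠ 0 := by positivity
    have h2 : (∫ x in Ioi (0:ℝ), ((c ^ 2 + x ^ 2) ^ (n + 2))⁻¹) =
        (2 * (n:ℝ) + 1) * (π / (2 * c) ^ (2 * n + 1) * (((2 * n).choose n : ℕ) : ℝ)) /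
          ((2 * (n:ℝ) + 2) * c ^ 2) := by
      rw [eq_div_iff hc2]; linarith [h]
    have e : n + 1 + 1 = n + 2 := rfl
    rw [e, h2]
    have hp : (2 * c : ℝ) ^ (2 * (n + 1) + 1) = (2 * c) ^ (2 * n + 1) * (4 * c ^ 2) := by
      rw [show 2 * (n + 1) + 1 = (2 * n + 1) + 2 by ring, pow_add]; ring
    rw [hp]
    have hq : ((2:ℝ) * c) ^ (2 * n + 1) ≠ 0 := by positivity
    have hch := choose_id n
    field_simp
    push_cast at hch ⊢
    linear_combination (-2:ℝ) * hch

lemma valB (hc : 0 < c) : ∀ n : ℕ,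
    ∫ x in Ioi (0:ℝ), log x / (c ^ 2 + x ^ 2) ^ (n + 1) =
      π / (2 * c) ^ (2 * n + 1) * (((2 * n).choose n : ℕ) : ℝ) *
        (log c - ∑ k ∈ Finset.Icc 1 n, 1 / (2 * (k:ℝ) - 1)) := by
  intro n
  induction n with
  | zero =>
    simp only [Nat.zero_eq, mul_zero, Nat.choose_self]
    rw [show Finset.Icc 1 0 = (∅ : Finset ℕ) by rfl]
    simpa [pow_one] using valB0 hc
  | succ n ih =>
    have hA := valA hc n
    have h := keyB hc n
    rw [ih, hA] at h
    have hc2 : ((2:ℝ) * n + 2) * c ^ 2 ≠ 0 := by positivity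
    have e : n + 1 + 1 = n + 2 := rfl
    have h2 : (∫ x in Ioi (0:ℝ), log x / (c ^ 2 + x ^ 2) ^ (n + 2)) =
        ((2 * (n:ℝ) + 1) * (π / (2 * c) ^ (2 * n + 1) * (((2 * n).choose n : ℕ) : ℝ) *
            (log c - ∑ k ∈ Finset.Icc 1 n, 1 / (2 * (k:ℝ) - 1)))
          - π / (2 * c) ^ (2 * n + 1) * (((2 * n).choose n : ℕ) : ℝ)) /
          ((2 * (n:ℝ) + 2) * c ^ 2) := by
      rw [eq_div_iff hc2]; linarith [h]
    rw [e, h2]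
    have hsum : ∑ k ∈ Finset.Icc 1 (n + 1), 1 / (2 * (k:ℝ) - 1) =
        (∑ k ∈ Finset.Icc 1 n, 1 / (2 * (k:ℝ) - 1)) + 1 / (2 * ((n:ℝ) + 1) - 1) := by
      rw [Finset.sum_Icc_succ_top (Nat.one_le_iff_ne_zero.mpr (Nat.succ_ne_zero n))]
      push_cast
      ring_nf
    rw [hsum]
    have hp : (2 * c : ℝ) ^ (2 * (n + 1) + 1) = (2 * c) ^ (2 * n + 1) * (4 * c ^ 2) := by
      rw [show 2 * (n + 1) + 1 = (2 * n + 1) + 2 by ring, pow_add]; ring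
    rw [hp]
    have hq : ((2:ℝ) * c) ^ (2 * n + 1) ≠ 0 := by positivity
    have hch := choose_id n
    have h2n1 : (2 * (n:ℝ) + 1) ≠ 0 := by positivity
    set S := ∑ k ∈ Finset.Icc 1 n, 1 / (2 * (k:ℝ) - 1) with hS
    have hden : (2 * ((n:ℝ) + 1) - 1) = 2 * (n:ℝ) + 1 := by ring
    rw [hden]
    field_simp
    push_cast at hch ⊢
    linear_combination (-2:ℝ) * ((2 * (n:ℝ) + 1) * (log c - S) - 1) * hch

end GR4231

/-- GR 4.231.7 (equivalent form): for `n ∈ ℕ` and `c > 0`,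
`∫_0^∞ ln x / (c²+x²)^(n+1) dx = (π/(2c)^{2n+1}) C(2n,n) (ln c - ∑_{k=1}^n 1/(2k-1))`. -/
theorem integral_log_div_sq_add_sq_pow (n : ℕ) (c : ℝ) (hc : 0 < c) :
    ∫ x in Set.Ioi (0:ℝ), Real.log x / (c ^ 2 + x ^ 2) ^ (n + 1) =
      (Real.pi / (2 * c) ^ (2 * n + 1)) * (Nat.choose (2 * n) n : ℝ) *
        (Real.log c - ∑ k ∈ Finset.Icc 1 n, 1 / (2 * (k : ℝ) - 1)) := by
  exact GR4231.valB hc n
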